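/- Define a graph G on the subsets of {1, ..., n} by joining K and K' if they differ by insertion or deletion of a single element (the edge graph of the n-cube, which is the edge graph of the secondary polytope of {0,...,n+1}). Define γ(K) = min(K ∪ {n+1}). Then for every subset J ⊆ {2, ..., n}, there is exactly one path K_0, K_1, ..., K_r in G with K_0 = {1} ∪ J, K_r = ∅, and γ(K_i) < γ(K_{i+1}) for all i; it is given by successively deleting the smallest remaining element. Consequently, the γ-monotone paths in G from the set γ^{-1}(1) of minimizers to ∅ are in bijection with subsets of {2,...,n}, and there are exactly 2^{n−1} of them. -/

import Mathlib

open Finset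

/-- Adjacency in the edge graph of the `n`-cube on subsets of `{1,…,n}`:
two subsets are adjacent iff they differ by insertion/deletion of one element. -/
def CubeAdj (K K' : Finset ℕ) : Prop :=
  ∃ x, (x ∉ K ∧ K' = insert x K) ∨ (x ∉ K' ∧ K = insert x K')

/-- `γ(K) = min (K ∪ {n+1})`. -/
def gammaMin (n : ℕ) (K : Finset ℕ) : ℕ :=
  (insert (n + 1) K).min' (Finset.insert_nonempty _ _)

/-- A `γ`-monotone path in the cube graph from `K₀` to `∅`. -/
def IsMonotonePath (n : ℕ) (K₀ : Finset ℕ) (L : List (Finset ℕ)) : Prop :=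
  (∀ K ∈ L, K ⊆ Finset.Icc 1 n) ∧
  L.Chain' CubeAdj ∧
  L.Chain' (fun K K' => gammaMin n K < gammaMin n K') ∧
  L.head? = some K₀ ∧ L.getLast? = some ∅

lemma gamma_empty (n : ℕ) : gammaMin n ∅ = n + 1 := by
  simp [gammaMin]

lemma gamma_insert (n x : ℕ) (K : Finset ℕ) :
    gammaMin n (insert x K) = min x (gammaMin n K) := by
  apply le_antisymm
  · apply le_min
    · exact Finset.min'_le _ x (by simp)
    · apply Finset.le_min'
      intro y hy
      exact Finset.min'_le _ y (by rcases Finset.mem_insert.mp hy with rfl | hy <;> simp [hy])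
  · unfold gammaMin
    have hm := Finset.min'_mem (insert (n + 1) (insert x K)) (Finset.insert_nonempty _ _)
    rcases Finset.mem_insert.mp hm with h1 | h1
    · rw [h1]
      exact (min_le_right _ _).trans (Finset.min'_le _ _ (Finset.mem_insert_self _ _))
    · rcases Finset.mem_insert.mp h1 with h2 | h2
      · rw [h2]; exact min_le_left _ _
      · exact (min_le_right _ _).trans (Finset.min'_le _ _ (Finset.mem_insert_of_mem h2))

lemma gamma_eq_min' (n : ℕ) (K : Finset ℕ) (h : K.Nonempty) (hsub : K ⊆ Finset.Icc 1 n) :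
    gammaMin n K = K.min' h := by
  apply le_antisymm
  · exact Finset.min'_le _ _ (mem_insert_of_mem (K.min'_mem h))
  · apply Finset.le_min'
    intro y hy
    rcases mem_insert.mp hy with rfl | hy
    · have := (mem_Icc.mp (hsub (K.min'_mem h))).2; omega
    · exact K.min'_le y hy

lemma step_forward (n : ℕ) (K : Finset ℕ) (h : K.Nonempty) (hsub : K ⊆ Finset.Icc 1 n) :
    CubeAdj K (K.erase (K.min' h)) ∧
      gammaMin n K < gammaMin n (K.erase (K.min' h)) := by
  constructor
  · exact ⟨K.min' h, Or.inr ⟨notMem_erase _ _, (insert_erase (K.min'_mem h)).symm⟩⟩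
  · rw [gamma_eq_min' n K h hsub]
    unfold gammaMin
    rw [Finset.lt_min'_iff]
    intro y hy
    rcases mem_insert.mp hy with rfl | hy
    · have := (mem_Icc.mp (hsub (K.min'_mem h))).2; omega
    · exact lt_of_le_of_ne (K.min'_le y (mem_of_mem_erase hy))
        (Ne.symm (ne_of_mem_erase hy))

lemma step_backward (n : ℕ) (K K' : Finset ℕ) (hK : K ⊆ Finset.Icc 1 n)
    (hadj : CubeAdj K K') (hlt : gammaMin n K < gammaMin n K') :
    ∃ h : K.Nonempty, K' = K.erase (K.min' h) := by
  obtain ⟨x, ⟨hxK, hEq⟩ | ⟨hxK', hEq⟩⟩ := hadj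
  · exfalso
    have := min_le_right x (gammaMin n K)
    rw [hEq, gamma_insert] at hlt
    omega
  · have hne : K.Nonempty := hEq ▸ insert_nonempty x K'
    refine ⟨hne, ?_⟩
    have hγK : gammaMin n K = min x (gammaMin n K') := by rw [hEq, gamma_insert]
    have hx_eq : gammaMin n K = x := by
      rcases min_cases x (gammaMin n K') with ⟨h1, _⟩ | ⟨h1, h2⟩ <;> omega
    have hmin : K.min' hne = x := by rw [← gamma_eq_min' n K hne hK, hx_eq]
    rw [hmin, hEq, erase_insert hxK']

/-- the canonical path: successively delete the smallest element. -/
def chainList (K : Finset ℕ) : List (Finset ℕ) :=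
  if h : K.Nonempty then K :: chainList (K.erase (K.min' h)) else [∅]
termination_by K.card
decreasing_by exact Finset.card_erase_lt_of_mem (K.min'_mem h)

lemma chainList_head (K : Finset ℕ) : (chainList K).head? = some K := by
  rw [chainList]
  split
  · rfl
  · next h => simp [not_nonempty_iff_eq_empty.mp h]

lemma chainList_getLast (K : Finset ℕ) : (chainList K).getLast? = some ∅ := by
  induction K using Finset.strongInductionOn with
  | _ K ih =>
    rw [chainList]
    split
    · next h =>
      have ihe := ih _ (Finset.erase_ssubset (K.min'_mem h))
      obtain ⟨x, xs, hxs⟩ := List.exists_cons_of_ne_nil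
        (l := chainList (K.erase (K.min' h))) (by intro hnil; rw [hnil] at ihe; simp at ihe)
      rw [hxs, List.getLast?_cons_cons, ← hxs, ihe]
    · simp

lemma chainList_subset (K : Finset ℕ) : ∀ A ∈ chainList K, A ⊆ K := by
  induction K using Finset.strongInductionOn with
  | _ K ih =>
    intro A hA
    rw [chainList] at hA
    split at hA
    · next h =>
      rcases List.mem_cons.mp hA with rfl | hA
      · exact subset_rfl
      · exact (ih _ (Finset.erase_ssubset (K.min'_mem h)) A hA).trans (erase_subset _ _)
    · simp at hA
      subst hA; exact empty_subset _

lemma chainList_chain' (n : ℕ) (R : Finset ℕ → Finset ℕ → Prop)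
    (hR : ∀ K (h : K.Nonempty), K ⊆ Finset.Icc 1 n → R K (K.erase (K.min' h))) :
    ∀ K, K ⊆ Finset.Icc 1 n → (chainList K).Chain' R := by
  intro K
  induction K using Finset.strongInductionOn with
  | _ K ih =>
    intro hK
    rw [chainList]
    split
    · next h =>
      rw [List.Chain', List.isChain_cons]
      constructor
      · intro y hy
        rw [chainList_head] at hy
        simp only [Option.mem_def, Option.some.injEq] at hy
        subst hy
        exact hR K h hK
      · exact ih _ (Finset.erase_ssubset (K.min'_mem h)) ((erase_subset _ _).trans hK)
    · exact List.isChain_singleton _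

lemma chainList_mono (n : ℕ) (K : Finset ℕ) (hK : K ⊆ Finset.Icc 1 n) :
    IsMonotonePath n K (chainList K) :=
  ⟨fun A hA => (chainList_subset K A hA).trans hK,
   chainList_chain' n _ (fun K h hsub => (step_forward n K h hsub).1) K hK,
   chainList_chain' n _ (fun K h hsub => (step_forward n K h hsub).2) K hK,
   chainList_head K, chainList_getLast K⟩

lemma mono_unique (n : ℕ) :
    ∀ (L : List (Finset ℕ)) (K : Finset ℕ), IsMonotonePath n K L → L = chainList K := by
  intro L
  induction L with
  | nil => intro K h; exact absurd h.2.2.2.1 (by simp)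
  | cons A L' ih =>
    intro K ⟨hsub, hadj, hγ, hhead, hlast⟩
    have hAK : A = K := by simpa using hhead
    subst hAK
    cases L' with
    | nil =>
      have : A = ∅ := by simpa using hlast
      subst this
      rw [chainList]
      simp
    | cons B L'' =>
      obtain ⟨h1, h2⟩ := List.isChain_cons_cons.mp hadj
      obtain ⟨g1, g2⟩ := List.isChain_cons_cons.mp hγ
      have hA : A ⊆ Finset.Icc 1 n := hsub A (by simp)
      obtain ⟨hne, hEq⟩ := step_backward n A B hA h1 g1
      have hmono' : IsMonotonePath n B (B :: L'') :=
        ⟨fun x hx => hsub x (List.mem_cons_of_mem _ hx), h2, g2, rfl,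
         by rw [← hlast, List.getLast?_cons_cons]⟩
      rw [chainList, dif_pos hne]
      rw [← hEq]
      exact congrArg (A :: ·) (ih B hmono')

lemma gamma_eq_one_iff (n : ℕ) (hn : 1 ≤ n) (K : Finset ℕ) (hK : K ⊆ Finset.Icc 1 n) :
    gammaMin n K = 1 ↔ 1 ∈ K := by
  constructor
  · intro h
    unfold gammaMin at h
    have hmem := Finset.min'_mem (insert (n + 1) K) (Finset.insert_nonempty _ _)
    rw [h] at hmem
    rcases mem_insert.mp hmem with h1 | h1
    · omega
    · exact h1
  · intro h
    apply le_antisymm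
    · exact Finset.min'_le _ _ (mem_insert_of_mem h)
    · apply Finset.le_min'
      intro y hy
      rcases mem_insert.mp hy with rfl | hy
      · omega
      · exact (mem_Icc.mp (hK hy)).1

theorem monotone_paths_cube (n : ℕ) (hn : 1 ≤ n) :
    (∀ J : Finset ℕ, J ⊆ Finset.Icc 2 n →
      (∃! L : List (Finset ℕ), IsMonotonePath n (insert 1 J) L) ∧
      (∀ L, IsMonotonePath n (insert 1 J) L →
        L.Chain' (fun K K' => ∃ h : K.Nonempty, K' = K.erase (K.min' h)))) ∧
    Nat.card {L : List (Finset ℕ) //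
        ∃ K₀, gammaMin n K₀ = 1 ∧ IsMonotonePath n K₀ L} = 2 ^ (n - 1) := by
  have hsub1 : ∀ J : Finset ℕ, J ⊆ Finset.Icc 2 n → insert 1 J ⊆ Finset.Icc 1 n := by
    intro J hJ x hx
    rcases mem_insert.mp hx with rfl | hx
    · exact mem_Icc.mpr ⟨le_refl 1, hn⟩
    · have := mem_Icc.mp (hJ hx); exact mem_Icc.mpr ⟨by omega, this.2⟩
  constructor
  · intro J hJ
    constructor
    · exact ⟨chainList (insert 1 J), chainList_mono n _ (hsub1 J hJ),
        fun L hL => mono_unique n L _ hL⟩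
    · intro L hL
      rw [mono_unique n L _ hL]
      exact chainList_chain' n _ (fun K h _ => ⟨h, rfl⟩) _ (hsub1 J hJ)
  · -- counting
    have hone : ∀ J : Finset ℕ, J ⊆ Finset.Icc 2 n → (1 : ℕ) ∉ J := by
      intro J hJ h1
      have := mem_Icc.mp (hJ h1); omega
    set f : {J : Finset ℕ // J ∈ (Finset.Icc 2 n).powerset} →
        {L : List (Finset ℕ) // ∃ K₀, gammaMin n K₀ = 1 ∧ IsMonotonePath n K₀ L} :=
      fun J => ⟨chainList (insert 1 J.1),
        insert 1 J.1,
        (gamma_eq_one_iff n hn _ (hsub1 J.1 (mem_powerset.mp J.2))).mpr (mem_insert_self _ _),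
        chainList_mono n _ (hsub1 J.1 (mem_powerset.mp J.2))⟩ with hf
    have hbij : Function.Bijective f := by
      constructor
      · rintro ⟨J, hJ⟩ ⟨J', hJ'⟩ h
        have := congrArg (fun L => L.1.head?) h
        simp only [hf, chainList_head, Option.some.injEq] at this
        have h1J := hone J (mem_powerset.mp hJ)
        have h1J' := hone J' (mem_powerset.mp hJ')
        apply Subtype.ext
        show J = J'
        rw [← Finset.erase_insert h1J, ← Finset.erase_insert h1J', this]
      · rintro ⟨L, K₀, hγ, hm⟩
        have hK₀L : K₀ ∈ L := by
          cases L with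
          | nil => exact absurd hm.2.2.2.1 (by simp)
          | cons A L' =>
            have : A = K₀ := by simpa using hm.2.2.2.1
            subst this; exact List.mem_cons_self
        have hK₀ : K₀ ⊆ Finset.Icc 1 n := hm.1 K₀ hK₀L
        have h1 : (1 : ℕ) ∈ K₀ := (gamma_eq_one_iff n hn K₀ hK₀).mp hγ
        refine ⟨⟨K₀.erase 1, mem_powerset.mpr ?_⟩, ?_⟩
        · intro x hx
          have hx1 : x ≠ 1 := ne_of_mem_erase hx
          have := mem_Icc.mp (hK₀ (mem_of_mem_erase hx))
          exact mem_Icc.mpr ⟨by omega, this.2⟩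
        · apply Subtype.ext
          simp only [hf, Finset.insert_erase h1]
          exact (mono_unique n L K₀ hm).symm
    rw [← Nat.card_eq_of_bijective f hbij, Nat.card_eq_finsetCard,
      Finset.card_powerset, Nat.card_Icc]
    have h21 : n + 1 - 2 = n - 1 := by omega
    rw [h21]
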